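/- Let R be a ring, n and k non-negative integers, and M a left R-module. The following are equivalent: (1) Ext_R^{k+1}(K, M) = 0 for every special super finitely presented left R-module K (i.e. the n-weak injective dimension of M is at most k); (2) Ext_R^{k+i}(K, M) = 0 for every special super finitely presented left R-module K and every i ≥ 1; (3) whenever 0 → M → E_0 → E_1 → ⋯ → E_k → 0 is an exact sequence of left R-modules in which E_0, …, E_{k−1} are n-weak injective, the module E_k is also n-weak injective; (4) there exists an exact sequence 0 → M → E_0 → E_1 → ⋯ → E_k → 0 of left R-modules in which every E_i is n-weak injective. -/

import Mathlib

/-! Definitions for `n`-weak injective and `n`-weak flat modules over an arbitrary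
(associative, unital, possibly noncommutative) ring `R`, following
Amini–Amzil–Bennis, "On n-weak injective and n-weak flat modules".

Left `R`-modules are types with `[Module R M]`; right `R`-modules are types with
`[Module Rᵐᵒᵖ M]`.  `Ext` is the derived functor of the ℤ-linear Yoneda functor on
`ModuleCat R`, and `Tor` is obtained as the left derived functor of the balanced
tensor product `N ⊗_R -` (constructed as a quotient of the ℤ-tensor product). -/

open CategoryTheory Limits TensorProduct

noncomputable section

universe u

namespace NWeak

variable (R : Type u) [Ring R]

/-- A left `R`-module `U` is *`n`-super finitely presented* if it admits a resolution
`⋯ → F_{n+1} → F_n → ⋯ → F_1 → F_0 → U → 0` by projective modules in which `F_i` is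
finitely generated for every `i ≥ n`. -/
def IsNSuperFP (n : ℕ) (U : Type u) [AddCommGroup U] [Module R U] : Prop :=
  ∃ (F : ℕ → ModuleCat.{u} R) (d : ∀ i, F (i + 1) ⟶ F i) (ε : F 0 →ₗ[R] U),
    (∀ i, Module.Projective R (F i)) ∧
    (∀ i, n ≤ i → Module.Finite R (F i)) ∧
    Function.Surjective ε ∧
    Function.Exact (d 0) ε ∧
    (∀ i, Function.Exact (d (i + 1)) (d i))

/-- A left `R`-module `K` is *special super finitely presented* (relative to `n`) if
there are an `n`-super finitely presented module `U` and a resolution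
`⋯ → F_{n+1} → F_n → ⋯ → F_0 → U → 0` as above such that `K ≅ Im (F_n → F_{n-1})`,
where for `n = 0` we read `K_{-1} := U`. -/
def IsSpecialSFP (n : ℕ) (K : Type u) [AddCommGroup K] [Module R K] : Prop :=
  ∃ (F : ℕ → ModuleCat.{u} R) (d : ∀ i, F (i + 1) ⟶ F i) (U : ModuleCat.{u} R)
    (ε : F 0 ⟶ U),
    (∀ i, Module.Projective R (F i)) ∧
    (∀ i, n ≤ i → Module.Finite R (F i)) ∧
    Function.Surjective ε ∧
    Function.Exact (d 0) ε ∧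
    (∀ i, Function.Exact (d (i + 1)) (d i)) ∧
    (match n with
      | 0 => Nonempty (K ≃ₗ[R] U)
      | m + 1 => Nonempty (K ≃ₗ[R] LinearMap.range (d m).hom))

/-- Vanishing of `Ext_R^i(K, M)` for left `R`-modules. -/
def extVanish (i : ℕ) (K : Type u) [AddCommGroup K] [Module R K]
    (M : Type u) [AddCommGroup M] [Module R M] : Prop :=
  Subsingleton (((Ext ℤ (ModuleCat.{u} R) i).obj
    (Opposite.op (ModuleCat.of R K))).obj (ModuleCat.of R M))

/-- A left `R`-module `M` is *`n`-weak injective* if `Ext_R^{n+1}(U, M) = 0` for every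
`n`-super finitely presented left `R`-module `U`. -/
def IsNWeakInjective (n : ℕ) (M : Type u) [AddCommGroup M] [Module R M] : Prop :=
  ∀ (U : ModuleCat.{u} R), IsNSuperFP R n U → extVanish R (n + 1) U M

/-- The left `R`-module `M` has *`n`-weak injective dimension at most `k`* if
`Ext_R^{k+1}(K, M) = 0` for every special super finitely presented left `R`-module
`K`. -/
def WIDimLE (n k : ℕ) (M : Type u) [AddCommGroup M] [Module R M] : Prop :=
  ∀ (K : ModuleCat.{u} R), IsSpecialSFP R n K → extVanish R (k + 1) K M

/-! ### The balanced tensor product and Tor -/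

/-- The additive subgroup of `N ⊗[ℤ] K` generated by the balancing relations
`(n·r) ⊗ k - n ⊗ (r·k)`. -/
def balRel (N : Type u) [AddCommGroup N] [Module Rᵐᵒᵖ N]
    (K : Type u) [AddCommGroup K] [Module R K] : AddSubgroup (N ⊗[ℤ] K) :=
  AddSubgroup.closure
    {x | ∃ (a : N) (r : R) (b : K),
      x = (MulOpposite.op r • a) ⊗ₜ[ℤ] b - a ⊗ₜ[ℤ] (r • b)}

/-- The balanced tensor product `N ⊗_R K` of a right `R`-module `N` and a left
`R`-module `K`, realized as a quotient of `N ⊗[ℤ] K`. -/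
def RTensor (N : Type u) [AddCommGroup N] [Module Rᵐᵒᵖ N]
    (K : Type u) [AddCommGroup K] [Module R K] : Type u :=
  (N ⊗[ℤ] K) ⧸ balRel R N K

instance (N : Type u) [AddCommGroup N] [Module Rᵐᵒᵖ N]
    (K : Type u) [AddCommGroup K] [Module R K] : AddCommGroup (RTensor R N K) :=
  inferInstanceAs (AddCommGroup ((N ⊗[ℤ] K) ⧸ balRel R N K))

variable {R}

/-- Functoriality of the balanced tensor product in the left-module variable. -/
def balMapRight (N : Type u) [AddCommGroup N] [Module Rᵐᵒᵖ N]
    {K K' : Type u} [AddCommGroup K] [Module R K] [AddCommGroup K'] [Module R K']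
    (f : K →ₗ[R] K') : RTensor R N K →+ RTensor R N K' :=
  QuotientAddGroup.map _ _
    (TensorProduct.map (LinearMap.id : N →ₗ[ℤ] N) (f.restrictScalars ℤ)).toAddMonoidHom
    (by
      rw [balRel, AddSubgroup.closure_le]
      rintro x ⟨a, r, b, rfl⟩
      simp only [SetLike.mem_coe, AddSubgroup.mem_comap, LinearMap.toAddMonoidHom_coe,
        map_sub, TensorProduct.map_tmul, LinearMap.coe_restrictScalars, LinearMap.id_coe,
        id_eq, LinearMap.map_smul]
      exact AddSubgroup.subset_closure ⟨a, r, f b, rfl⟩)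

/-- Functoriality of the balanced tensor product in the right-module variable. -/
def balMapLeft (K : Type u) [AddCommGroup K] [Module R K]
    {N N' : Type u} [AddCommGroup N] [Module Rᵐᵒᵖ N] [AddCommGroup N'] [Module Rᵐᵒᵖ N']
    (g : N →ₗ[Rᵐᵒᵖ] N') : RTensor R N K →+ RTensor R N' K :=
  QuotientAddGroup.map _ _
    (TensorProduct.map (g.restrictScalars ℤ) (LinearMap.id : K →ₗ[ℤ] K)).toAddMonoidHom
    (by
      rw [balRel, AddSubgroup.closure_le]
      rintro x ⟨a, r, b, rfl⟩
      simp only [SetLike.mem_coe, AddSubgroup.mem_comap, LinearMap.toAddMonoidHom_coe,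
        map_sub, TensorProduct.map_tmul, LinearMap.coe_restrictScalars, LinearMap.id_coe,
        id_eq, LinearMap.map_smul]
      exact AddSubgroup.subset_closure ⟨g a, r, b, rfl⟩)

lemma balMapRight_mk (N : Type u) [AddCommGroup N] [Module Rᵐᵒᵖ N]
    {K K' : Type u} [AddCommGroup K] [Module R K] [AddCommGroup K'] [Module R K']
    (f : K →ₗ[R] K') (y : N ⊗[ℤ] K) :
    balMapRight N f (QuotientAddGroup.mk y)
      = QuotientAddGroup.mk (TensorProduct.map (LinearMap.id : N →ₗ[ℤ] N)
          (f.restrictScalars ℤ) y) := rfl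

variable (R)

/-- The functor `K ↦ N ⊗_R K` from left `R`-modules to abelian groups, for a fixed
right `R`-module `N`. -/
def tensorFunctor (N : Type u) [AddCommGroup N] [Module Rᵐᵒᵖ N] :
    ModuleCat.{u} R ⥤ AddCommGrpCat.{u} where
  obj K := AddCommGrpCat.of (RTensor R N K)
  map {K K'} f := AddCommGrpCat.ofHom (balMapRight N f.hom)
  map_id K := by
    refine AddCommGrpCat.ext fun x => ?_
    refine QuotientAddGroup.induction_on x fun y => ?_
    show balMapRight N (LinearMap.id) (QuotientAddGroup.mk y) = QuotientAddGroup.mk y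
    rw [balMapRight_mk]
    congr 1
    refine TensorProduct.induction_on y (by simp) (fun a b => by simp) ?_
    intro s t hs ht
    simp_all [map_add]
  map_comp {K K' K''} f g := by
    refine AddCommGrpCat.ext fun x => ?_
    refine QuotientAddGroup.induction_on x fun y => ?_
    show balMapRight N (g.hom.comp f.hom) (QuotientAddGroup.mk y)
      = balMapRight N g.hom (balMapRight N f.hom (QuotientAddGroup.mk y))
    rw [balMapRight_mk, balMapRight_mk, balMapRight_mk]
    congr 1
    refine TensorProduct.induction_on y (by simp) (fun a b => by simp) ?_
    intro s t hs ht
    simp_all [map_add]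

instance (N : Type u) [AddCommGroup N] [Module Rᵐᵒᵖ N] : (tensorFunctor R N).Additive where
  map_add {K K'} {f g} := by
    refine AddCommGrpCat.ext fun x => ?_
    refine QuotientAddGroup.induction_on x fun y => ?_
    show balMapRight N (f + g).hom (QuotientAddGroup.mk y)
      = balMapRight N f.hom (QuotientAddGroup.mk y) + balMapRight N g.hom (QuotientAddGroup.mk y)
    rw [balMapRight_mk, balMapRight_mk, balMapRight_mk]
    refine (congrArg (QuotientAddGroup.mk (s := balRel R N K')) ?_).trans
      (QuotientAddGroup.mk_add _ _ _)
    refine TensorProduct.induction_on y (by simp)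
      (fun a b => by
        simp only [TensorProduct.map_tmul, LinearMap.coe_restrictScalars, LinearMap.id_coe, id_eq]
        rw [show (f + g).hom b = f.hom b + g.hom b from rfl, TensorProduct.tmul_add]) ?_
    intro s t hs ht
    simp_all [map_add]
    abel

/-- Vanishing of `Tor_i^R(N, K)` for a right `R`-module `N` and a left `R`-module `K`:
the `i`-th left derived functor of `N ⊗_R -` vanishes at `K`. -/
def torVanish (i : ℕ) (N : Type u) [AddCommGroup N] [Module Rᵐᵒᵖ N]
    (K : Type u) [AddCommGroup K] [Module R K] : Prop :=
  Subsingleton (((tensorFunctor R N).leftDerived i).obj (ModuleCat.of R K))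

/-- A right `R`-module `N` is *`n`-weak flat* if `Tor^R_{n+1}(N, U) = 0` for every
`n`-super finitely presented left `R`-module `U`. -/
def IsNWeakFlat (n : ℕ) (N : Type u) [AddCommGroup N] [Module Rᵐᵒᵖ N] : Prop :=
  ∀ (U : ModuleCat.{u} R), IsNSuperFP R n U → torVanish R (n + 1) N U

/-- The right `R`-module `N` has *`n`-weak flat dimension at most `k`* if
`Tor^R_{k+1}(N, K) = 0` for every special super finitely presented left `R`-module
`K`. -/
def WFDimLE (n k : ℕ) (N : Type u) [AddCommGroup N] [Module Rᵐᵒᵖ N] : Prop :=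
  ∀ (K : ModuleCat.{u} R), IsSpecialSFP R n K → torVanish R (k + 1) N K

/-! ### Character modules -/

/-- The character module `M⋆ = Hom_ℤ(M, ℚ/ℤ)` of a left `R`-module is a right
`R`-module via `(f · r) (m) = f (r · m)`. -/
instance charModuleRight (M : Type u) [AddCommGroup M] [Module R M] :
    Module Rᵐᵒᵖ (CharacterModule M) where
  smul ρ f := f.comp (DistribMulAction.toAddMonoidHom M ρ.unop)
  one_smul f := CharacterModule.ext _ fun m => congrArg f (one_smul R m)
  mul_smul ρ σ f := CharacterModule.ext _ fun m => congrArg f (mul_smul σ.unop ρ.unop m)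
  smul_zero ρ := CharacterModule.ext _ fun _ => rfl
  smul_add ρ f g := CharacterModule.ext _ fun _ => rfl
  add_smul ρ σ f := CharacterModule.ext _ fun m => by
    show f ((ρ.unop + σ.unop) • m) = f (ρ.unop • m) + f (σ.unop • m)
    rw [add_smul, map_add]
  zero_smul f := CharacterModule.ext _ fun m => by
    show f ((0 : R) • m) = 0
    rw [zero_smul, map_zero]

/-- The character module `N⋆ = Hom_ℤ(N, ℚ/ℤ)` of a right `R`-module is a left
`R`-module via `(r · f) (m) = f (m · r)`. -/
instance charModuleLeft (N : Type u) [AddCommGroup N] [Module Rᵐᵒᵖ N] :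
    Module R (CharacterModule N) where
  smul r f := f.comp (DistribMulAction.toAddMonoidHom N (MulOpposite.op r))
  one_smul f := CharacterModule.ext _ fun m => congrArg f (one_smul Rᵐᵒᵖ m)
  mul_smul r s f := CharacterModule.ext _ fun m => congrArg f (by
    show (MulOpposite.op (r * s)) • m = (MulOpposite.op s) • (MulOpposite.op r) • m
    rw [← mul_smul, MulOpposite.op_mul])
  smul_zero r := CharacterModule.ext _ fun _ => rfl
  smul_add r f g := CharacterModule.ext _ fun _ => rfl
  add_smul r s f := CharacterModule.ext _ fun m => by
    show f ((MulOpposite.op r + MulOpposite.op s) • m)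
      = f ((MulOpposite.op r) • m) + f ((MulOpposite.op s) • m)
    rw [add_smul, map_add]
  zero_smul f := CharacterModule.ext _ fun m => by
    show f ((0 : Rᵐᵒᵖ) • m) = 0
    rw [zero_smul, map_zero]

/-! ### Purity and flatness -/

/-- A submodule `N` of a left `R`-module `M` is *pure* if for every right `R`-module
`L` the induced map `L ⊗_R N → L ⊗_R M` is injective. -/
def IsPureSubmodule (M : Type u) [AddCommGroup M] [Module R M] (N : Submodule R M) :
    Prop :=
  ∀ (L : Type u) [AddCommGroup L] [Module Rᵐᵒᵖ L],
    Function.Injective (balMapRight L N.subtype)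

/-- A submodule `N` of a right `R`-module `M` is *pure* if for every left `R`-module
`L` the induced map `N ⊗_R L → M ⊗_R L` is injective. -/
def IsPureSubmoduleRight (M : Type u) [AddCommGroup M] [Module Rᵐᵒᵖ M]
    (N : Submodule Rᵐᵒᵖ M) : Prop :=
  ∀ (L : Type u) [AddCommGroup L] [Module R L],
    Function.Injective (balMapLeft L N.subtype)

/-- A left `R`-module `M` is *flat* if tensoring with `M` preserves injectivity of
maps of right `R`-modules. -/
def IsFlatLeft (M : Type u) [AddCommGroup M] [Module R M] : Prop :=
  ∀ (A B : Type u) [AddCommGroup A] [Module Rᵐᵒᵖ A] [AddCommGroup B] [Module Rᵐᵒᵖ B]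
    (g : A →ₗ[Rᵐᵒᵖ] B), Function.Injective g → Function.Injective (balMapLeft M g)

/-- The left `R`-module `K` has *projective dimension at most `m`*: there is an exact
sequence `0 → P_m → ⋯ → P_1 → P_0 → K → 0` with all `P_i` projective (encoded by a
projective resolution vanishing in degrees `> m`). -/
def ProjDimLE (K : Type u) [AddCommGroup K] [Module R K] (m : ℕ) : Prop :=
  ∃ (P : ℕ → ModuleCat.{u} R) (d : ∀ i, P (i + 1) ⟶ P i) (ε : P 0 →ₗ[R] K),
    (∀ i, Module.Projective R (P i)) ∧
    Function.Surjective ε ∧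
    Function.Exact (d 0) ε ∧
    (∀ i, Function.Exact (d (i + 1)) (d i)) ∧
    (∀ i, m < i → Subsingleton (P i))

end NWeak


/-! ### Proof development -/
noncomputable section NWPdev

namespace NWP
variable {R : Type u} [Ring R]
variable (F : ℕ → ModuleCat.{u} R) (d : ∀ i, F (i+1) ⟶ F i)

/-- `V F d M m` says `Ext^{m+1}(K, M) = 0` in concrete terms, for `K` resolved by `F`. -/
def V (M : Type u) [AddCommGroup M] [Module R M] (m : ℕ) : Prop :=
  ∀ g : F (m+1) →ₗ[R] M, g.comp (d (m+1)).hom = 0 →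
    ∃ h : F m →ₗ[R] M, h.comp (d m).hom = g

variable {K : Type u} [AddCommGroup K] [Module R K]
variable (ε : F 0 →ₗ[R] K)
variable (hproj : ∀ i, Module.Projective R (F i))
variable (hsurj : Function.Surjective ε) (hex0 : Function.Exact (d 0) ε)
variable (hex : ∀ i, Function.Exact (d (i+1)) (d i))

section
include hex in
lemma hdd : ∀ i, d (i+1) ≫ d i = 0 := by
  intro i
  ext x
  exact (hex i).apply_apply_eq_zero x

/-- The chain complex built from the data. -/
def cplx : ChainComplex (ModuleCat.{u} R) ℕ :=
  ChainComplex.of F d (hdd F d hex)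

lemma cplx_d (i : ℕ) : (cplx F d hex).d (i+1) i = d i := ChainComplex.of_d _ _ _

/-- The resolution. -/
def resn : ProjectiveResolution (ModuleCat.of R K) where
  complex := cplx F d hex
  projective := fun n => (IsProjective.iff_projective (F n)).mp (hproj n)
  π := (ChainComplex.toSingle₀Equiv _ _).symm ⟨(show (cplx F d hex).X 0 ⟶ ModuleCat.of R K from ModuleCat.ofHom ε), by
    rw [cplx_d]
    ext x
    exact hex0.apply_apply_eq_zero x⟩
  quasiIso := ⟨fun n => by
    cases n with
    | zero =>
      rw [ChainComplex.quasiIsoAt₀_iff, ShortComplex.quasiIso_iff_of_zeros']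
      rotate_left
      · rfl
      · rfl
      · rfl
      constructor
      · rw [ShortComplex.moduleCat_exact_iff]
        intro x hx
        simp only [HomologicalComplex.shortComplexFunctor'_obj_f,
          HomologicalComplex.shortComplexFunctor'_map_τ₂,
          ChainComplex.toSingle₀Equiv_symm_apply_f_zero] at hx ⊢
        obtain ⟨y, hy⟩ := (hex0 x).mp hx
        exact ⟨y, (congrArg (fun φ => φ.hom y) (cplx_d F d hex 0)).trans hy⟩
      · simp only [HomologicalComplex.shortComplexFunctor'_map_τ₂,
          ChainComplex.toSingle₀Equiv_symm_apply_f_zero]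
        exact (ModuleCat.epi_iff_surjective _).mpr hsurj
    | succ n =>
      rw [quasiIsoAt_iff_exactAt']
      · rw [HomologicalComplex.exactAt_iff' _ (n+2) (n+1) n (by simp) (by simp),
          ShortComplex.moduleCat_exact_iff]
        intro x hx
        simp only [HomologicalComplex.shortComplexFunctor'_obj_f,
          HomologicalComplex.shortComplexFunctor'_obj_g] at hx ⊢
        rw [cplx_d] at hx
        obtain ⟨y, hy⟩ := (hex n x).mp hx
        exact ⟨y, by rw [cplx_d]; exact hy⟩
      · apply ChainComplex.exactAt_succ_single_obj⟩
end
end NWP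

namespace NWP
variable {R : Type u} [Ring R]
variable (F : ℕ → ModuleCat.{u} R) (d : ∀ i, F (i+1) ⟶ F i)
variable {K : Type u} [AddCommGroup K] [Module R K]
variable (ε : F 0 →ₗ[R] K)
variable (hproj : ∀ i, Module.Projective R (F i))
variable (hsurj : Function.Surjective ε) (hex0 : Function.Exact (d 0) ε)
variable (hex : ∀ i, Function.Exact (d (i+1)) (d i))

lemma subsingleton_iff_of_iso {A B : ModuleCat.{u} ℤ} (e : A ≅ B) :
    Subsingleton A ↔ Subsingleton B := by
  constructor <;> intro h
  · exact ((forget _).mapIso e).toEquiv.symm.subsingleton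
  · exact ((forget _).mapIso e).toEquiv.subsingleton

lemma isZero_iff_subsingleton (A : ModuleCat.{u} ℤ) : IsZero A ↔ Subsingleton A := by
  constructor
  · intro h
    have := h.eq_of_src (𝟙 A) 0
    constructor; intro a b
    calc a = (𝟙 A) a := rfl
    _ = (0 : A ⟶ A) a := by rw [this]
    _ = (𝟙 A) b := by rw [this]; rfl
    _ = b := rfl
  · intro h
    exact ModuleCat.isZero_of_subsingleton A

lemma resn_complex : (resn F d ε hproj hsurj hex0 hex).complex = cplx F d hex := rfl

include hproj hsurj hex0 hex in
theorem extVanish_iff_V (M : Type u) [AddCommGroup M] [Module R M] (m : ℕ) :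
    NWeak.extVanish R (m+1) K M ↔ V F d M m := by
  set P := resn F d ε hproj hsurj hex0 hex with hP
  set Y := (cplx F d hex).linearYonedaObj ℤ (ModuleCat.of R M) with hY
  have iso := P.isoExt (R := ℤ) (m+1) (ModuleCat.of R M)
  rw [NWeak.extVanish, subsingleton_iff_of_iso iso]
  rw [← isZero_iff_subsingleton, ← HomologicalComplex.exactAt_iff_isZero_homology]
  rw [HomologicalComplex.exactAt_iff' _ m (m+1) (m+2) (by simp) (by simp),
    ShortComplex.moduleCat_exact_iff]
  have hPc : P.complex = cplx F d hex := rfl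
  simp only [HomologicalComplex.sc', HomologicalComplex.shortComplexFunctor'_obj_f,
    HomologicalComplex.shortComplexFunctor'_obj_g, ChainComplex.linearYonedaObj_d, hPc, cplx_d]
  rw [hP] at *
  simp only [resn_complex, cplx_d]
  constructor
  · intro h g hg
    obtain ⟨y, hy⟩ := h (ModuleCat.ofHom g) (by
      show d (m+1) ≫ ModuleCat.ofHom g = 0
      ext x; exact LinearMap.congr_fun hg x)
    have hy' : d m ≫ y = ModuleCat.ofHom g := hy
    exact ⟨y.hom, by ext x; exact ConcreteCategory.congr_hom hy' x⟩
  · intro h g hg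
    let g' : F (m+1) ⟶ ModuleCat.of R M := g
    have hg' : d (m+1) ≫ g' = 0 := hg
    obtain ⟨y, hy⟩ := h g'.hom (by ext x; exact ConcreteCategory.congr_hom hg' x)
    refine ⟨ModuleCat.ofHom y, ?_⟩
    show d m ≫ ModuleCat.ofHom y = g'
    ext x; exact LinearMap.congr_fun hy x

end NWP

end NWPdev


namespace NWP
variable {R : Type u} [Ring R]
variable (F : ℕ → ModuleCat.{u} R) (d : ∀ i, F (i+1) ⟶ F i)

lemma V_cast {M : Type u} [AddCommGroup M] [Module R M] {a b : ℕ} (h : a = b)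
    (hV : V F d M a) : V F d M b := h ▸ hV

lemma V_congr {M M' : Type u} [AddCommGroup M] [Module R M] [AddCommGroup M'] [Module R M']
    (e : M ≃ₗ[R] M') {m : ℕ} (h : V F d M m) : V F d M' m := by
  intro g hg
  obtain ⟨h₀, hh⟩ := h ((e.symm : M' →ₗ[R] M) ∘ₗ g) (by
    rw [LinearMap.comp_assoc, hg, LinearMap.comp_zero])
  refine ⟨(e : M →ₗ[R] M') ∘ₗ h₀, ?_⟩
  ext x
  have := LinearMap.congr_fun hh x
  simp only [LinearMap.comp_apply] at this ⊢
  rw [this]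
  exact e.apply_symm_apply _

lemma V_of_subsingleton {M : Type u} [AddCommGroup M] [Module R M] [Subsingleton M]
    (m : ℕ) : V F d M m := by
  intro g _
  exact ⟨0, by ext x; exact Subsingleton.elim _ _⟩

/-- factor a map through an injection whose range contains the image -/
lemma factor_inj {A E X : Type u} [AddCommGroup A] [Module R A] [AddCommGroup E] [Module R E]
    [AddCommGroup X] [Module R X] (ι : A →ₗ[R] E) (hι : Function.Injective ι)
    (g : X →ₗ[R] E) (hrange : ∀ x, g x ∈ LinearMap.range ι) :
    ∃ a : X →ₗ[R] A, ι ∘ₗ a = g := by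
  refine ⟨((LinearEquiv.ofInjective ι hι).symm : LinearMap.range ι →ₗ[R] A) ∘ₗ
    g.codRestrict (LinearMap.range ι) hrange, ?_⟩
  ext x
  simp only [LinearMap.comp_apply, LinearMap.codRestrict_apply]
  have : ∀ y : LinearMap.range ι, ι ((LinearEquiv.ofInjective ι hι).symm y) = (y : E) := by
    intro y
    conv_rhs => rw [← (LinearEquiv.ofInjective ι hι).apply_symm_apply y]
    rfl
  exact this _

section SES
variable {A E C : Type u} [AddCommGroup A] [Module R A] [AddCommGroup E] [Module R E]
  [AddCommGroup C] [Module R C]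
  (ι : A →ₗ[R] E) (π : E →ₗ[R] C)

lemma L1 (hproj : ∀ i, Module.Projective R (F i)) (hex : ∀ i, Function.Exact (d (i+1)) (d i))
    (hι : Function.Injective ι) (hπ : Function.Surjective π) (hses : Function.Exact ι π)
    (m : ℕ) (hA : V F d A (m+1)) (hE : V F d E m) : V F d C m := by
  intro g hg
  haveI := hproj (m+1)
  obtain ⟨g', hg'⟩ := Module.projective_lifting_property π g hπ
  obtain ⟨a, ha⟩ := factor_inj ι hι (g' ∘ₗ (d (m+1)).hom) (fun x => by
    refine (hses _).mp ?_
    have h1 : π (g' ((d (m+1)) x)) = g ((d (m+1)) x) := LinearMap.congr_fun hg' _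
    have h2 : g ((d (m+1)) x) = 0 := LinearMap.congr_fun hg x
    rw [LinearMap.comp_apply, h1, h2])
  have ha2 : a ∘ₗ (d (m+2)).hom = 0 := by
    ext x
    apply hι
    have : ι (a ((d (m+2)) x)) = g' ((d (m+1)) ((d (m+2)) x)) :=
      LinearMap.congr_fun ha _
    rw [LinearMap.comp_apply, this, (hex (m+1)).apply_apply_eq_zero x]
    simp
  obtain ⟨b, hb⟩ := hA a ha2
  obtain ⟨h', hh'⟩ := hE (g' - ι ∘ₗ b) (by
    ext x
    have h1 : ι (b ((d (m+1)) x)) = ι (a x) := congrArg ι (LinearMap.congr_fun hb x)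
    have h2 : ι (a x) = g' ((d (m+1)) x) := LinearMap.congr_fun ha x
    simp only [LinearMap.comp_apply, LinearMap.sub_apply, LinearMap.zero_apply]
    rw [h1, h2, sub_self])
  refine ⟨π ∘ₗ h', ?_⟩
  ext x
  have h1 : h' ((d m) x) = g' x - ι (b x) := LinearMap.congr_fun hh' x
  have h2 : π (ι (b x)) = 0 := (hses _).mpr ⟨b x, rfl⟩
  simp only [LinearMap.comp_apply]
  rw [h1, map_sub, h2, sub_zero]
  exact LinearMap.congr_fun hg' x

lemma L2 (hproj : ∀ i, Module.Projective R (F i)) (hex : ∀ i, Function.Exact (d (i+1)) (d i))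
    (hι : Function.Injective ι) (hπ : Function.Surjective π) (hses : Function.Exact ι π)
    (m : ℕ) (hC : V F d C m) (hE : V F d E (m+1)) : V F d A (m+1) := by
  intro a ha
  obtain ⟨e, he⟩ := hE (ι ∘ₗ a) (by rw [LinearMap.comp_assoc, ha, LinearMap.comp_zero])
  obtain ⟨c, hc⟩ := hC (π ∘ₗ e) (by
    ext x
    have h1 : e ((d (m+1)) x) = ι (a x) := LinearMap.congr_fun he x
    have h2 : π (ι (a x)) = 0 := (hses _).mpr ⟨a x, rfl⟩
    simp only [LinearMap.comp_apply, LinearMap.zero_apply]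
    rw [h1, h2])
  haveI := hproj m
  obtain ⟨c', hc'⟩ := Module.projective_lifting_property π c hπ
  obtain ⟨b, hb⟩ := factor_inj ι hι (e - c' ∘ₗ (d m).hom) (fun x => by
    refine (hses _).mp ?_
    have h1 : π (c' ((d m) x)) = c ((d m) x) := LinearMap.congr_fun hc' _
    have h2 : c ((d m) x) = π (e x) := LinearMap.congr_fun hc x
    simp only [LinearMap.sub_apply, LinearMap.comp_apply, map_sub]
    rw [h1, h2, sub_self])
  refine ⟨b, ?_⟩
  ext x
  apply hι
  have h1 : ι (b ((d (m+1)) x)) = e ((d (m+1)) x) - c' ((d m) ((d (m+1)) x)) :=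
    LinearMap.congr_fun hb _
  have h2 : e ((d (m+1)) x) = ι (a x) := LinearMap.congr_fun he x
  simp only [LinearMap.comp_apply]
  rw [h1, h2, (hex m).apply_apply_eq_zero x, map_zero, sub_zero]

end SES

lemma V_of_categorical_injective (hex : ∀ i, Function.Exact (d (i+1)) (d i))
    (E : ModuleCat.{u} R) (hE : CategoryTheory.Injective E) (m : ℕ) : V F d E m := by
  intro g hg
  have hker : LinearMap.ker (d m).hom ≤ LinearMap.ker g := by
    intro x hx
    rw [LinearMap.mem_ker] at hx ⊢
    obtain ⟨y, hy⟩ := (hex m x).mp hx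
    rw [← hy]
    exact LinearMap.congr_fun hg y
  set q₀ : (F (m+1) ⧸ LinearMap.ker (d m).hom) →ₗ[R] E :=
    Submodule.liftQ _ g hker with hq₀
  set eq := LinearMap.quotKerEquivRange (d m).hom with heq
  set q : LinearMap.range (d m).hom →ₗ[R] E := q₀ ∘ₗ (eq.symm : _ →ₗ[R] _)
    with hq
  -- extend along the inclusion using injectivity
  haveI := hE
  set X : ModuleCat.{u} R := ModuleCat.of R (LinearMap.range (d m).hom)
  set incl : X ⟶ F m := ModuleCat.ofHom (LinearMap.range (d m).hom).subtype
  haveI : CategoryTheory.Mono incl :=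
    (ModuleCat.mono_iff_injective _).mpr (Submodule.injective_subtype _)
  set h : F m ⟶ E := CategoryTheory.Injective.factorThru (ModuleCat.ofHom q) incl
  have hfac : ∀ y : X, h (incl y) = q y := fun y =>
    ConcreteCategory.congr_hom (CategoryTheory.Injective.comp_factorThru (ModuleCat.ofHom q) incl) y
  refine ⟨h.hom, ?_⟩
  ext x
  have hmem : (d m) x ∈ LinearMap.range (d m).hom := ⟨x, rfl⟩
  have : h ((d m) x) = q ⟨(d m) x, hmem⟩ := hfac ⟨(d m) x, hmem⟩
  rw [LinearMap.comp_apply, this, hq]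
  have heq2 : eq (Submodule.Quotient.mk x) = ⟨(d m) x, hmem⟩ := by
    apply Subtype.ext
    rfl
  rw [LinearMap.comp_apply, ← heq2, LinearEquiv.coe_coe, LinearEquiv.symm_apply_apply]
  rfl

end NWP


namespace NWP
variable {R : Type u} [Ring R]

lemma ker_equiv_comp {A B C : Type u} [AddCommGroup A] [Module R A] [AddCommGroup B]
    [Module R B] [AddCommGroup C] [Module R C] (f : A →ₗ[R] B) (e : B ≃ₗ[R] C) :
    LinearMap.ker ((e : B →ₗ[R] C) ∘ₗ f) = LinearMap.ker f := by
  ext x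
  simp only [LinearMap.mem_ker, LinearMap.comp_apply, LinearEquiv.coe_coe,
    LinearEquiv.map_eq_zero_iff]

/-- Lemma A specialized to a special-SFP witness: `Ext^{j+1}(K, M) = 0 ↔ V F d M (n+j)`. -/
lemma extVanish_iff_V_special {n : ℕ} {K : Type u} [AddCommGroup K] [Module R K]
    (F : ℕ → ModuleCat.{u} R) (d : ∀ i, F (i+1) ⟶ F i) (U : ModuleCat.{u} R) (ε : F 0 ⟶ U)
    (hproj : ∀ i, Module.Projective R (F i))
    (hsurj : Function.Surjective ε) (hex0 : Function.Exact (d 0) ε)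
    (hex : ∀ i, Function.Exact (d (i+1)) (d i))
    (hmatch : match n with
      | 0 => Nonempty (K ≃ₗ[R] U)
      | m + 1 => Nonempty (K ≃ₗ[R] LinearMap.range (d m).hom))
    (j : ℕ) (M : Type u) [AddCommGroup M] [Module R M] :
    NWeak.extVanish R (j+1) K M ↔ V F d M (n+j) := by
  cases n with
  | zero =>
    obtain ⟨e⟩ := hmatch
    rw [Nat.zero_add]
    refine extVanish_iff_V F d ((e.symm : U →ₗ[R] K) ∘ₗ ε.hom) hproj
      (e.symm.surjective.comp hsurj) ?_ hex M j
    rw [LinearMap.exact_iff, ker_equiv_comp, ← LinearMap.exact_iff]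
    exact hex0
  | succ m =>
    obtain ⟨e⟩ := hmatch
    refine extVanish_iff_V (fun i => F ((m+1)+i)) (fun i => d ((m+1)+i))
      ((e.symm : LinearMap.range (d m).hom →ₗ[R] K) ∘ₗ
        (d m).hom.rangeRestrict)
      (fun i => hproj _) (e.symm.surjective.comp (LinearMap.surjective_rangeRestrict _)) ?_
      (fun i => hex _) M j
    rw [LinearMap.exact_iff, ker_equiv_comp, LinearMap.ker_rangeRestrict,
      ← LinearMap.exact_iff]
    exact hex m

section Udata
variable {n : ℕ} (F : ℕ → ModuleCat.{u} R) (d : ∀ i, F (i+1) ⟶ F i)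
  {U : Type u} [AddCommGroup U] [Module R U] (ε : F 0 →ₗ[R] U)
  (hproj : ∀ i, Module.Projective R (F i))
  (hfin : ∀ i, n ≤ i → Module.Finite R (F i))
  (hsurj : Function.Surjective ε) (hex0 : Function.Exact (d 0) ε)
  (hex : ∀ i, Function.Exact (d (i+1)) (d i))

include hproj hfin hsurj hex0 hex

/-- Fact 2: if `E` is `n`-weak injective, then all the `V`'s in degrees `≥ n` hold. -/
lemma V_of_NWI (E : ModuleCat.{u} R) (hE : NWeak.IsNWeakInjective R n E) (m : ℕ) :
    V F d (E : Type u) (n+m) := by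
  cases m with
  | zero =>
    have hU : NWeak.IsNSuperFP R n (ModuleCat.of R U) :=
      ⟨F, d, ε, hproj, hfin, hsurj, hex0, hex⟩
    have := hE (ModuleCat.of R U) hU
    exact (extVanish_iff_V F d ε hproj hsurj hex0 hex (E : Type u) n).mp this
  | succ j =>
    set U' : Type u := ↥(LinearMap.range (d j).hom) with hU'
    have hU : NWeak.IsNSuperFP R n (ModuleCat.of R U') := by
      refine ⟨fun i => F ((j+1)+i), fun i => d ((j+1)+i),
        (d j).hom.rangeRestrict, fun i => hproj _,
        fun i hi => hfin _ (le_trans hi (by omega)), LinearMap.surjective_rangeRestrict _,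
        ?_, fun i => hex _⟩
      rw [LinearMap.exact_iff, LinearMap.ker_rangeRestrict, ← LinearMap.exact_iff]
      exact hex j
    have := hE (ModuleCat.of R U') hU
    have hV : V (fun i => F ((j+1)+i)) (fun i => d ((j+1)+i)) (E : Type u) n :=
      (extVanish_iff_V (fun i => F ((j+1)+i)) (fun i => d ((j+1)+i))
        (d j).hom.rangeRestrict (fun i => hproj _)
        (LinearMap.surjective_rangeRestrict _)
        (by rw [LinearMap.exact_iff, LinearMap.ker_rangeRestrict, ← LinearMap.exact_iff]
            exact hex j)
        (fun i => hex _) (E : Type u) n).mp this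
    exact V_cast F d (show (j+1)+n = n+(j+1) by omega) hV

/-- From `WIDimLE`: all `V`'s in degrees `≥ n + k` hold for `M`. -/
lemma V_from_WIDim (k : ℕ) (M : Type u) [AddCommGroup M] [Module R M]
    (hdim : NWeak.WIDimLE R n k M) (t : ℕ) : V F d M (n+(k+t)) := by
  cases t with
  | zero =>
    cases n with
    | zero =>
      have hK : NWeak.IsSpecialSFP R 0 (ModuleCat.of R U) :=
        ⟨F, d, ModuleCat.of R U, ModuleCat.ofHom ε, hproj, hfin, hsurj, hex0, hex, ⟨LinearEquiv.refl R U⟩⟩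
      have := hdim (ModuleCat.of R U) hK
      have hV := (extVanish_iff_V_special (n := 0) F d (ModuleCat.of R U) (ModuleCat.ofHom ε) hproj hsurj
        hex0 hex ⟨LinearEquiv.refl R U⟩ k M).mp this
      exact V_cast F d (by omega) hV
    | succ m =>
      set K' : Type u := ↥(LinearMap.range (d m).hom) with hK'
      have hK : NWeak.IsSpecialSFP R (m+1) (ModuleCat.of R K') :=
        ⟨F, d, ModuleCat.of R U, ModuleCat.ofHom ε, hproj, hfin, hsurj, hex0, hex,
          ⟨LinearEquiv.refl R K'⟩⟩
      have := hdim (ModuleCat.of R K') hK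
      have hV := (extVanish_iff_V_special (n := m+1) F d (ModuleCat.of R U) (ModuleCat.ofHom ε) hproj hsurj
        hex0 hex ⟨LinearEquiv.refl R K'⟩ k M).mp this
      exact V_cast F d (by omega) hV
  | succ p =>
    -- use the shifted complex, with K' the corresponding syzygy
    have key : ∀ (K' : Type u) (_ : AddCommGroup K') (_ : Module R K'),
        (match n with
          | 0 => Nonempty (K' ≃ₗ[R] LinearMap.range (d ((p+1)+0-1)).hom)
          | _ + 1 => True) → True := fun _ _ _ _ => trivial
    clear key
    cases n with
    | zero =>
      set K' : Type u := ↥(LinearMap.range (d p).hom) with hK'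
      have hK : NWeak.IsSpecialSFP R 0 (ModuleCat.of R K') := by
        refine ⟨fun i => F ((p+1)+i), fun i => d ((p+1)+i), ModuleCat.of R K',
          ModuleCat.ofHom (d p).hom.rangeRestrict, fun i => hproj _,
          fun i _ => hfin _ (by omega), LinearMap.surjective_rangeRestrict _, ?_,
          fun i => hex _, ⟨LinearEquiv.refl R K'⟩⟩
        have hex0'' : Function.Exact (d ((p+1)+0)) ((d p).hom.rangeRestrict) := by
          rw [LinearMap.exact_iff, LinearMap.ker_rangeRestrict, ← LinearMap.exact_iff]
          exact hex p
        exact hex0''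
      have := hdim (ModuleCat.of R K') hK
      have hV := (extVanish_iff_V_special (n := 0) (fun i => F ((p+1)+i))
        (fun i => d ((p+1)+i)) (ModuleCat.of R K')
        (ModuleCat.ofHom (d p).hom.rangeRestrict) (fun i => hproj _)
        (LinearMap.surjective_rangeRestrict _)
        (by have hex0'' : Function.Exact (d ((p+1)+0)) ((d p).hom.rangeRestrict) := by
              rw [LinearMap.exact_iff, LinearMap.ker_rangeRestrict, ← LinearMap.exact_iff]
              exact hex p
            exact hex0'')
        (fun i => hex _) ⟨LinearEquiv.refl R K'⟩ k M).mp this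
      -- hV : V (shifted) M (0+k) = V F d M ((p+1)+(0+k))
      exact V_cast F d (show (p+1)+(0+k) = 0+(k+(p+1)) by omega) hV
    | succ m =>
      set K' : Type u := ↥(LinearMap.range (d ((p+1)+m)).hom)
        with hK'
      have hex0' : Function.Exact (d ((p+1)+0)) ((d p).hom.rangeRestrict) := by
        rw [LinearMap.exact_iff, LinearMap.ker_rangeRestrict, ← LinearMap.exact_iff]
        exact hex p
      have hK : NWeak.IsSpecialSFP R (m+1) (ModuleCat.of R K') :=
        ⟨fun i => F ((p+1)+i), fun i => d ((p+1)+i),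
          ModuleCat.of R (↥(LinearMap.range (d p).hom)),
          ModuleCat.ofHom (d p).hom.rangeRestrict, fun i => hproj _,
          fun i hi => hfin _ (by omega), LinearMap.surjective_rangeRestrict _, hex0',
          fun i => hex _, ⟨LinearEquiv.refl R K'⟩⟩
      have := hdim (ModuleCat.of R K') hK
      have hV := (extVanish_iff_V_special (n := m+1) (fun i => F ((p+1)+i))
        (fun i => d ((p+1)+i))
        (ModuleCat.of R (↥(LinearMap.range (d p).hom)))
        (ModuleCat.ofHom (d p).hom.rangeRestrict) (fun i => hproj _)
        (LinearMap.surjective_rangeRestrict _) hex0'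
        (fun i => hex _) ⟨LinearEquiv.refl R K'⟩ k M).mp this
      exact V_cast F d (show (p+1)+((m+1)+k) = (m+1)+(k+(p+1)) by omega) hV

end Udata
end NWP


namespace NWP
variable {R : Type u} [Ring R]

section Climb
variable (F : ℕ → ModuleCat.{u} R) (d : ∀ i, F (i+1) ⟶ F i)
  (hproj : ∀ i, Module.Projective R (F i)) (hex : ∀ i, Function.Exact (d (i+1)) (d i))
  (n : ℕ)

include hproj hex

lemma climb_up (k : ℕ) : ∀ (M : Type u) [AddCommGroup M] [Module R M]
    (E : ℕ → ModuleCat.{u} R) (f : M →ₗ[R] E 0) (dE : ∀ i, E i ⟶ E (i+1)),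
    Function.Injective f → Function.Exact f (dE 0) →
    (∀ i, Function.Exact (dE i) (dE (i+1))) → (∀ i, k < i → Subsingleton (E i)) →
    (∀ i, i < k → ∀ m, V F d (E i : Type u) (n+m)) →
    V F d M (n+k) → V F d (E k : Type u) n := by
  induction k with
  | zero =>
    intro M _ _ E f dE hinj hex0 hexs hsub hE hM
    haveI : Subsingleton (E 1 : Type u) := hsub 1 one_pos
    have hsurjf : Function.Surjective f := by
      intro y
      have : (dE 0) y = 0 := Subsingleton.elim _ _
      exact (hex0 y).mp this
    have e : M ≃ₗ[R] (E 0 : Type u) := LinearEquiv.ofBijective f ⟨hinj, hsurjf⟩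
    exact V_congr F d e (V_cast F d (Nat.add_zero n) hM)
  | succ k ih =>
    intro M _ _ E f dE hinj hex0 hexs hsub hE hM
    set C0 : Type u := ↥(LinearMap.range (dE 0).hom) with hC0
    have hses : Function.Exact f ((dE 0).hom.rangeRestrict) := by
      rw [LinearMap.exact_iff, LinearMap.ker_rangeRestrict, ← LinearMap.exact_iff]
      exact hex0
    have hVC0 : V F d C0 (n+k) := by
      refine L1 F d f ((dE 0).hom.rangeRestrict) hproj hex hinj
        (LinearMap.surjective_rangeRestrict _) hses (n+k) hM (hE 0 (Nat.succ_pos k) k)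
    have hex0' : Function.Exact ((LinearMap.range (dE 0).hom).subtype)
        (dE 1).hom := by
      rw [LinearMap.exact_iff, Submodule.range_subtype, LinearMap.exact_iff.mp (hexs 0)]
    exact ih C0 (fun i => E (i+1))
      ((LinearMap.range (dE 0).hom).subtype) (fun i => dE (i+1))
      (Submodule.injective_subtype _) hex0' (fun i => hexs (i+1))
      (fun i hi => hsub (i+1) (by omega)) (fun i hi m => hE (i+1) (by omega) m) hVC0

lemma climb_down (k : ℕ) : ∀ (M : Type u) [AddCommGroup M] [Module R M]
    (E : ℕ → ModuleCat.{u} R) (f : M →ₗ[R] E 0) (dE : ∀ i, E i ⟶ E (i+1)),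
    Function.Injective f → Function.Exact f (dE 0) →
    (∀ i, Function.Exact (dE i) (dE (i+1))) → (∀ i, k < i → Subsingleton (E i)) →
    (∀ i, ∀ m, V F d (E i : Type u) (n+m)) →
    V F d M (n+k) := by
  induction k with
  | zero =>
    intro M _ _ E f dE hinj hex0 hexs hsub hE
    haveI : Subsingleton (E 1 : Type u) := hsub 1 one_pos
    have hsurjf : Function.Surjective f := by
      intro y
      have : (dE 0) y = 0 := Subsingleton.elim _ _
      exact (hex0 y).mp this
    have e : M ≃ₗ[R] (E 0 : Type u) := LinearEquiv.ofBijective f ⟨hinj, hsurjf⟩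
    exact V_cast F d (Nat.add_zero n).symm (V_congr F d e.symm (hE 0 0))
  | succ k ih =>
    intro M _ _ E f dE hinj hex0 hexs hsub hE
    set C0 : Type u := ↥(LinearMap.range (dE 0).hom) with hC0
    have hex0' : Function.Exact ((LinearMap.range (dE 0).hom).subtype)
        (dE 1).hom := by
      rw [LinearMap.exact_iff, Submodule.range_subtype, LinearMap.exact_iff.mp (hexs 0)]
    have hVC0 : V F d C0 (n+k) :=
      ih C0 (fun i => E (i+1)) ((LinearMap.range (dE 0).hom).subtype)
        (fun i => dE (i+1)) (Submodule.injective_subtype _) hex0' (fun i => hexs (i+1))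
        (fun i hi => hsub (i+1) (by omega)) (fun i m => hE (i+1) m)
    have hses : Function.Exact f ((dE 0).hom.rangeRestrict) := by
      rw [LinearMap.exact_iff, LinearMap.ker_rangeRestrict, ← LinearMap.exact_iff]
      exact hex0
    exact L2 F d f ((dE 0).hom.rangeRestrict) hproj hex hinj
      (LinearMap.surjective_rangeRestrict _) hses (n+k) hVC0 (hE 0 (k+1))

end Climb

open CategoryTheory in
lemma exists_seq (k : ℕ) : ∀ (M : Type u) [AddCommGroup M] [Module R M],
    ∃ (E : ℕ → ModuleCat.{u} R) (f : M →ₗ[R] E 0) (dE : ∀ i, E i ⟶ E (i+1)),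
      Function.Injective f ∧ Function.Exact f (dE 0) ∧
      (∀ i, Function.Exact (dE i) (dE (i+1))) ∧
      (∀ i, k < i → Subsingleton (E i)) ∧
      (∀ i, i < k → CategoryTheory.Injective (E i)) := by
  induction k with
  | zero =>
    intro M _ _
    refine ⟨fun i => Nat.casesOn i (ModuleCat.of R M) (fun _ => ModuleCat.of R PUnit),
      LinearMap.id, fun i => 0, fun a b h => h, ?_, ?_, ?_, fun i hi => by omega⟩
    · intro y
      constructor
      · intro _; exact ⟨y, rfl⟩
      · intro _; rfl
    · intro i y
      constructor
      · intro _
        exact ⟨0, Subsingleton.elim _ _⟩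
      · intro _
        exact Subsingleton.elim _ _
    · intro i hi
      match i, hi with
      | (j+1), _ => exact inferInstanceAs (Subsingleton PUnit)
  | succ k ih =>
    intro M _ _
    set J : ModuleCat.{u} R := Injective.under (ModuleCat.of R M) with hJ
    set ι : M →ₗ[R] J := (Injective.ι (ModuleCat.of R M)).hom with hι
    have hinjι : Function.Injective ι :=
      (ModuleCat.mono_iff_injective (Injective.ι (ModuleCat.of R M))).mp inferInstance
    set C : Type u := (J : Type u) ⧸ LinearMap.range ι with hC
    obtain ⟨E', f', dE', hinj', hex0', hexs', hsub', hinjectives'⟩ := ih C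
    refine ⟨fun i => Nat.casesOn i J (fun j => E' j), ι,
      fun i => Nat.casesOn i (ModuleCat.ofHom (f' ∘ₗ (LinearMap.range ι).mkQ)) (fun j => dE' j),
      hinjι, ?_, ?_, ?_, ?_⟩
    · rw [LinearMap.exact_iff]
      show LinearMap.ker (f' ∘ₗ (LinearMap.range ι).mkQ) = LinearMap.range ι
      rw [LinearMap.ker_comp, LinearMap.ker_eq_bot.mpr hinj', Submodule.comap_bot,
        Submodule.ker_mkQ]
    · intro i
      cases i with
      | zero =>
        rw [LinearMap.exact_iff]
        show LinearMap.ker (dE' 0).hom =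
          LinearMap.range (f' ∘ₗ (LinearMap.range ι).mkQ)
        have h1 : LinearMap.range (f' ∘ₗ (LinearMap.range ι).mkQ) = LinearMap.range f' := by
          rw [LinearMap.range_comp, Submodule.range_mkQ, Submodule.map_top]
        rw [h1, LinearMap.exact_iff.mp hex0']
      | succ j => exact hexs' j
    · intro i hi
      match i, hi with
      | (j+1), hi => exact hsub' j (by omega)
    · intro i hi
      cases i with
      | zero => exact inferInstanceAs (CategoryTheory.Injective J)
      | succ j => exact hinjectives' j (by omega)

variable (n : ℕ) in
lemma NWI_of_injective (X : ModuleCat.{u} R) (hX : CategoryTheory.Injective X) :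
    NWeak.IsNWeakInjective R n X := by
  intro U hU
  obtain ⟨F, d, ε, hproj, hfin, hsurj, hex0, hex⟩ := hU
  exact (extVanish_iff_V F d ε hproj hsurj hex0 hex (X : Type u) n).mpr
    (V_of_categorical_injective F d hex X hX n)

variable (n : ℕ) in
lemma NWI_of_subsingleton (X : ModuleCat.{u} R) (hX : Subsingleton (X : Type u)) :
    NWeak.IsNWeakInjective R n X := by
  intro U hU
  obtain ⟨F, d, ε, hproj, hfin, hsurj, hex0, hex⟩ := hU
  haveI := hX
  exact (extVanish_iff_V F d ε hproj hsurj hex0 hex (X : Type u) n).mpr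
    (V_of_subsingleton F d n)

end NWP

open NWeak in
/-- For a left `R`-module `M` the following are equivalent:
(1) the `n`-weak injective dimension of `M` is at most `k` (i.e.
`Ext_R^{k+1}(K, M) = 0` for all special super finitely presented `K`);
(2) `Ext_R^{k+i}(K, M) = 0` for all special super finitely presented `K` and `i ≥ 1`;
(3) in any exact sequence `0 → M → E_0 → ⋯ → E_k → 0` with `E_0, …, E_{k-1}`
`n`-weak injective, `E_k` is also `n`-weak injective;
(4) there is an exact sequence `0 → M → E_0 → ⋯ → E_k → 0` with all `E_i`
`n`-weak injective. -/
theorem wiDimLE_tfae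
    (R : Type u) [Ring R] (n k : ℕ) (M : Type u) [AddCommGroup M] [Module R M] :
    (WIDimLE R n k M ↔
      (∀ (K : Type u) [AddCommGroup K] [Module R K], IsSpecialSFP R n K →
        ∀ i : ℕ, 1 ≤ i → extVanish R (k + i) K M)) ∧
    (WIDimLE R n k M ↔
      (∀ (E : ℕ → ModuleCat.{u} R) (f : M →ₗ[R] E 0) (d : ∀ i, E i ⟶ E (i + 1)),
        Function.Injective f → Function.Exact f (d 0) →
        (∀ i, Function.Exact (d i) (d (i + 1))) →
        (∀ i, k < i → Subsingleton (E i)) →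
        (∀ i, i < k → IsNWeakInjective R n (E i)) → IsNWeakInjective R n (E k))) ∧
    (WIDimLE R n k M ↔
      (∃ (E : ℕ → ModuleCat.{u} R) (f : M →ₗ[R] E 0) (d : ∀ i, E i ⟶ E (i + 1)),
        Function.Injective f ∧ Function.Exact f (d 0) ∧
        (∀ i, Function.Exact (d i) (d (i + 1))) ∧
        (∀ i, k < i → Subsingleton (E i)) ∧
        (∀ i, IsNWeakInjective R n (E i)))) := by
  have h12 : WIDimLE R n k M →
      (∀ (K : Type u) [AddCommGroup K] [Module R K], IsSpecialSFP R n K →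
        ∀ i : ℕ, 1 ≤ i → extVanish R (k + i) K M) := by
    intro h1 K _ _ hK i hi
    obtain ⟨F, d, U, ε, hproj, hfin, hsurj, hex0, hex, hmatch⟩ := hK
    obtain ⟨p, rfl⟩ : ∃ p, i = p + 1 := ⟨i - 1, by omega⟩
    have hV := NWP.V_from_WIDim (n := n) F d ε.hom hproj hfin hsurj hex0 hex
      k M h1 p
    exact (NWP.extVanish_iff_V_special (n := n) F d U ε hproj hsurj hex0 hex hmatch
      (k+p) M).mpr hV
  have h21 : (∀ (K : Type u) [AddCommGroup K] [Module R K], IsSpecialSFP R n K →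
        ∀ i : ℕ, 1 ≤ i → extVanish R (k + i) K M) → WIDimLE R n k M := by
    intro h2 K hK
    exact h2 K hK 1 le_rfl
  have h13 : WIDimLE R n k M →
      (∀ (E : ℕ → ModuleCat.{u} R) (f : M →ₗ[R] E 0) (d : ∀ i, E i ⟶ E (i + 1)),
        Function.Injective f → Function.Exact f (d 0) →
        (∀ i, Function.Exact (d i) (d (i + 1))) →
        (∀ i, k < i → Subsingleton (E i)) →
        (∀ i, i < k → IsNWeakInjective R n (E i)) → IsNWeakInjective R n (E k)) := by
    intro h1 E f dE hinjf hex0E hexsE hsubE hEwi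
    intro U hU
    obtain ⟨F, d, ε, hproj, hfin, hsurj, hex0, hex⟩ := hU
    refine (NWP.extVanish_iff_V F d ε hproj hsurj hex0 hex (E k : Type u) n).mpr ?_
    refine NWP.climb_up F d hproj hex n k M E f dE hinjf hex0E hexsE hsubE ?_ ?_
    · intro i hi m
      exact NWP.V_of_NWI (n := n) F d ε hproj hfin hsurj hex0 hex (E i) (hEwi i hi) m
    · exact NWP.V_cast F d (by omega)
        (NWP.V_from_WIDim (n := n) F d ε hproj hfin hsurj hex0 hex k M h1 0)
  have h34 : (∀ (E : ℕ → ModuleCat.{u} R) (f : M →ₗ[R] E 0) (d : ∀ i, E i ⟶ E (i + 1)),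
        Function.Injective f → Function.Exact f (d 0) →
        (∀ i, Function.Exact (d i) (d (i + 1))) →
        (∀ i, k < i → Subsingleton (E i)) →
        (∀ i, i < k → IsNWeakInjective R n (E i)) → IsNWeakInjective R n (E k)) →
      (∃ (E : ℕ → ModuleCat.{u} R) (f : M →ₗ[R] E 0) (d : ∀ i, E i ⟶ E (i + 1)),
        Function.Injective f ∧ Function.Exact f (d 0) ∧
        (∀ i, Function.Exact (d i) (d (i + 1))) ∧
        (∀ i, k < i → Subsingleton (E i)) ∧
        (∀ i, IsNWeakInjective R n (E i))) := by
    intro h3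
    obtain ⟨E, f, dE, hinj, hex0E, hexsE, hsubE, hinjE⟩ := NWP.exists_seq (R := R) k M
    refine ⟨E, f, dE, hinj, hex0E, hexsE, hsubE, ?_⟩
    intro i
    rcases lt_trichotomy i k with hi | rfl | hi
    · exact NWP.NWI_of_injective n (E i) (hinjE i hi)
    · exact h3 E f dE hinj hex0E hexsE hsubE
        (fun j hj => NWP.NWI_of_injective n (E j) (hinjE j hj))
    · haveI := hsubE i hi
      exact NWP.NWI_of_subsingleton n (E i) (hsubE i hi)
  have h41 : (∃ (E : ℕ → ModuleCat.{u} R) (f : M →ₗ[R] E 0) (d : ∀ i, E i ⟶ E (i + 1)),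
        Function.Injective f ∧ Function.Exact f (d 0) ∧
        (∀ i, Function.Exact (d i) (d (i + 1))) ∧
        (∀ i, k < i → Subsingleton (E i)) ∧
        (∀ i, IsNWeakInjective R n (E i))) → WIDimLE R n k M := by
    intro h4 K hK
    obtain ⟨E, f, dE, hinj, hex0E, hexsE, hsubE, hwi⟩ := h4
    obtain ⟨F, d, U, ε, hproj, hfin, hsurj, hex0, hex, hmatch⟩ := hK
    refine (NWP.extVanish_iff_V_special (n := n) F d U ε hproj hsurj hex0 hex hmatch
      k M).mpr ?_
    exact NWP.climb_down F d hproj hex n k M E f dE hinj hex0E hexsE hsubE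
      (fun i m => NWP.V_of_NWI (n := n) F d ε.hom hproj hfin hsurj hex0 hex
        (E i) (hwi i) m)
  exact ⟨⟨h12, h21⟩, ⟨h13, fun h3 => h41 (h34 h3)⟩, ⟨fun h1 => h34 (h13 h1), h41⟩⟩
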